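/- Let ℓ : W × Z → ℝ be nonnegative and H-smooth in w (gradient H-Lipschitz in dual norm, and ‖∇ℓ(w,z)‖_* ≤ √(4Hℓ(w,z))). Suppose ŵ and ŵ' are minimizers of two λ-strongly convex regularized empirical objectives that differ only in one of n data points. Then ‖ŵ' - ŵ‖ ≤ (4√H / (λn)) (√(ℓ(ŵ', z_i)) + √(ℓ(ŵ, z_i'))), where z_i and z_i' are the differing data points. -/

import Mathlib

lemma grad_ineq_aux {V : Type*} [NormedAddCommGroup V] [NormedSpace ℝ V]
    {W : Set V} (hW : Convex ℝ W) {f : V → ℝ} {g : V → (V →L[ℝ] ℝ)}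
    (hc : ConvexOn ℝ W f) (hd : ∀ w, HasFDerivAt f (g w) w)
    {x y : V} (hx : x ∈ W) (hy : y ∈ W) :
    f x + g x (y - x) ≤ f y := by
  set A : ℝ → V := fun t => t • (y - x) + x with hA
  have hmem : ∀ t ∈ Set.Icc (0:ℝ) 1, A t ∈ W := by
    intro t ht
    have : A t = (1 - t) • x + t • y := by
      simp only [hA]; module
    rw [this]
    exact hW hx hy (by linarith [ht.2]) ht.1 (by ring)
  have hφ : ConvexOn ℝ (Set.Icc (0:ℝ) 1) (f ∘ A) := by
    have h1 : ConvexOn ℝ (A ⁻¹' W) (f ∘ A) := by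
      have := hc.comp_affineMap
        ((LinearMap.toAffineMap (LinearMap.toSpanSingleton ℝ V (y - x))) + AffineMap.const ℝ ℝ x)
      convert this using 2 <;> rfl
    exact h1.subset (fun t ht => hmem t ht) (convex_Icc 0 1)
  have hderivA : HasDerivAt A (y - x) 0 := by
    simpa [hA] using ((hasDerivAt_id (0:ℝ)).smul_const (y - x)).add_const x
  have hA0 : A 0 = x := by simp [hA]
  have hderivφ : HasDerivAt (f ∘ A) (g x (y - x)) 0 := by
    have := (hd (A 0)).comp_hasDerivAt 0 hderivA
    rwa [hA0] at this
  have hs := hφ.le_slope_of_hasDerivAt (Set.left_mem_Icc.2 zero_le_one)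
    (Set.right_mem_Icc.2 zero_le_one) zero_lt_one hderivφ
  have : slope (f ∘ A) 0 1 = f y - f x := by
    simp [slope_def_field, hA]
  rw [this] at hs
  linarith

theorem regularized_erm_stability_distance
    {V : Type*} [NormedAddCommGroup V] [NormedSpace ℝ V] {Z : Type*}
    (W : Set V) (hW : Convex ℝ W)
    (ℓ : V → Z → ℝ) (g : V → Z → (V →L[ℝ] ℝ)) (F : V → ℝ)
    (H lam : ℝ) (hH : 0 ≤ H) (hlam : 0 < lam)
    (n : ℕ) (hn : 0 < n) (z : Fin n → Z) (z' : Z) (i : Fin n)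
    (hnn : ∀ w zz, 0 ≤ ℓ w zz)
    (hconv : ∀ zz, ConvexOn ℝ W (fun w => ℓ w zz))
    (hderiv : ∀ w zz, HasFDerivAt (fun v => ℓ v zz) (g w zz) w)
    (hgrad : ∀ w zz, ‖g w zz‖ ≤ Real.sqrt (4 * H * ℓ w zz))
    -- the two regularized empirical objectives, differing only in the i-th point
    (Lhat Lhat' : V → ℝ)
    (hL : ∀ w, Lhat w = (1 / (n : ℝ)) * ∑ j, ℓ w (z j) + lam * F w)
    (hL' : ∀ w, Lhat' w = (1 / (n : ℝ)) * ∑ j, ℓ w (Function.update z i z' j) + lam * F w)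
    -- λ-strong convexity of both objectives w.r.t. the norm
    (hscL : ∀ u ∈ W, ∀ v ∈ W, ∀ a b : ℝ, 0 ≤ a → 0 ≤ b → a + b = 1 →
      Lhat (a • u + b • v) ≤ a * Lhat u + b * Lhat v - a * b * (lam / 2) * ‖u - v‖ ^ 2)
    (hscL' : ∀ u ∈ W, ∀ v ∈ W, ∀ a b : ℝ, 0 ≤ a → 0 ≤ b → a + b = 1 →
      Lhat' (a • u + b • v) ≤ a * Lhat' u + b * Lhat' v - a * b * (lam / 2) * ‖u - v‖ ^ 2)
    -- the minimizers
    (what what' : V) (hwhatW : what ∈ W) (hwhat'W : what' ∈ W)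
    (hmin : ∀ w ∈ W, Lhat what ≤ Lhat w)
    (hmin' : ∀ w ∈ W, Lhat' what' ≤ Lhat' w) :
    ‖what' - what‖ ≤ (4 * Real.sqrt H / (lam * n)) *
      (Real.sqrt (ℓ what' (z i)) + Real.sqrt (ℓ what z')) := by
  set D := ‖what' - what‖ with hD
  have hDnn : 0 ≤ D := norm_nonneg _
  have hnpos : (0:ℝ) < n := Nat.cast_pos.2 hn
  -- midpoint
  have hmidW : (1/2 : ℝ) • what + (1/2 : ℝ) • what' ∈ W :=
    hW hwhatW hwhat'W (by norm_num) (by norm_num) (by norm_num)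
  have hnormsymm : ‖what - what'‖ = D := by rw [hD, norm_sub_rev]
  -- strong convexity + minimality
  have h1 : lam / 4 * D ^ 2 ≤ Lhat what' - Lhat what := by
    have hsc := hscL what hwhatW what' hwhat'W (1/2) (1/2) (by norm_num) (by norm_num) (by norm_num)
    have hm := hmin _ hmidW
    rw [hnormsymm] at hsc
    nlinarith
  have hmid'W : (1/2 : ℝ) • what' + (1/2 : ℝ) • what ∈ W :=
    hW hwhat'W hwhatW (by norm_num) (by norm_num) (by norm_num)
  have h2 : lam / 4 * D ^ 2 ≤ Lhat' what - Lhat' what' := by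
    have hsc := hscL' what' hwhat'W what hwhatW (1/2) (1/2) (by norm_num) (by norm_num) (by norm_num)
    have hm := hmin' _ hmid'W
    nlinarith
  -- the sum difference
  have hsum : ∀ w, ∑ j, ℓ w (Function.update z i z' j) = ∑ j, ℓ w (z j) - ℓ w (z i) + ℓ w z' := by
    intro w
    have : (fun j => ℓ w (Function.update z i z' j)) =
        Function.update (fun j => ℓ w (z j)) i (ℓ w z') := by
      funext j
      by_cases hj : j = i <;> simp [Function.update, hj]
    rw [this, Finset.sum_update_of_mem (Finset.mem_univ i)]
    have h2 := Finset.sum_eq_sum_sdiff_singleton_add (Finset.mem_univ i) (fun j => ℓ w (z j))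
    linarith
  -- combine
  have hkey : lam / 2 * D ^ 2 ≤
      (1 / (n:ℝ)) * ((ℓ what' (z i) - ℓ what (z i)) + (ℓ what z' - ℓ what' z')) := by
    have e1 := hL what; have e2 := hL what'; have e3 := hL' what; have e4 := hL' what'
    rw [hsum what] at e3; rw [hsum what'] at e4
    have := add_le_add h1 h2
    have hinv : (0:ℝ) < 1 / (n:ℝ) := by positivity
    nlinarith
  -- gradient inequalities
  have hsqrt : ∀ w zz, Real.sqrt (4 * H * ℓ w zz) = 2 * Real.sqrt H * Real.sqrt (ℓ w zz) := by
    intro w zz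
    rw [show (4:ℝ) * H * ℓ w zz = (2*Real.sqrt H)^2 * ℓ w zz by
        rw [mul_pow, Real.sq_sqrt hH]; ring,
      Real.sqrt_mul (by positivity), Real.sqrt_sq (by positivity)]
  have hg1 : ℓ what' (z i) - ℓ what (z i) ≤ 2 * Real.sqrt H * Real.sqrt (ℓ what' (z i)) * D := by
    have := grad_ineq_aux hW (hconv (z i)) (fun w => hderiv w (z i)) hwhat'W hwhatW
    have hgb := hgrad what' (z i)
    rw [hsqrt] at hgb
    have : -(g what' (z i) (what - what')) ≤ ‖g what' (z i)‖ * D := by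
      rw [← hnormsymm]
      calc -(g what' (z i) (what - what')) ≤ ‖g what' (z i) (what - what')‖ :=
            (neg_le_abs _).trans_eq (Real.norm_eq_abs _).symm
        _ ≤ ‖g what' (z i)‖ * ‖what - what'‖ := (g what' (z i)).le_opNorm _
    nlinarith [Real.sqrt_nonneg (ℓ what' (z i)), Real.sqrt_nonneg H,
      grad_ineq_aux hW (hconv (z i)) (fun w => hderiv w (z i)) hwhat'W hwhatW]
  have hg2 : ℓ what z' - ℓ what' z' ≤ 2 * Real.sqrt H * Real.sqrt (ℓ what z') * D := by
    have hgb := hgrad what z'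
    rw [hsqrt] at hgb
    have : -(g what z' (what' - what)) ≤ ‖g what z'‖ * D := by
      calc -(g what z' (what' - what)) ≤ ‖g what z' (what' - what)‖ :=
            (neg_le_abs _).trans_eq (Real.norm_eq_abs _).symm
        _ ≤ ‖g what z'‖ * ‖what' - what‖ := (g what z').le_opNorm _
    nlinarith [Real.sqrt_nonneg (ℓ what z'), Real.sqrt_nonneg H,
      grad_ineq_aux hW (hconv z') (fun w => hderiv w z') hwhatW hwhat'W]
  -- final algebra
  set S := Real.sqrt (ℓ what' (z i)) + Real.sqrt (ℓ what z') with hS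
  have hSnn : 0 ≤ S := by positivity
  have hfin : lam / 2 * D ^ 2 ≤ (1 / (n:ℝ)) * (2 * Real.sqrt H * S * D) := by
    have hinv : (0:ℝ) < 1 / (n:ℝ) := by positivity
    have := add_le_add hg1 hg2
    calc lam / 2 * D ^ 2 ≤ (1 / (n:ℝ)) * ((ℓ what' (z i) - ℓ what (z i)) + (ℓ what z' - ℓ what' z')) := hkey
      _ ≤ (1 / (n:ℝ)) * (2 * Real.sqrt H * S * D) := by
          apply mul_le_mul_of_nonneg_left _ hinv.le
          rw [hS]; nlinarith
  have hclean : lam / 2 * D ^ 2 * n ≤ 2 * Real.sqrt H * S * D := by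
    have h := mul_le_mul_of_nonneg_right hfin hnpos.le
    calc lam / 2 * D ^ 2 * (n:ℝ) ≤ (1 / (n:ℝ) * (2 * Real.sqrt H * S * D)) * n := h
      _ = 2 * Real.sqrt H * S * D := by field_simp
  rcases eq_or_lt_of_le hDnn with hD0 | hDpos
  · rw [← hD0]
    positivity
  · rw [div_mul_eq_mul_div, le_div_iff₀ (by positivity)]
    have h3 : (D * (lam * n)) * D ≤ (4 * Real.sqrt H * S) * D := by
      clear_value D S
      nlinarith [hclean]
    exact le_of_mul_le_mul_right h3 hDpos
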